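/- If f : X → Y is a quasi-isometry between geodesic metric spaces, then X is Gromov hyperbolic if and only if Y is Gromov hyperbolic. -/

import Mathlib

open Metric Set

/-- `s` is a geodesic segment from `x` to `y`: the image of an isometric
parametrization of `[0, dist x y]` sending the endpoints to `x` and `y`. -/
def IsGeodesicSegment {X : Type*} [MetricSpace X] (s : Set X) (x y : X) : Prop :=
  ∃ γ : ℝ → X, γ 0 = x ∧ γ (dist x y) = y ∧ s = γ '' Set.Icc 0 (dist x y) ∧
    ∀ a ∈ Set.Icc (0:ℝ) (dist x y), ∀ b ∈ Set.Icc (0:ℝ) (dist x y),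
      dist (γ a) (γ b) = |a - b|

/-- A geodesic metric space: any two points are joined by a geodesic segment. -/
def GeodesicSpace (X : Type*) [MetricSpace X] : Prop :=
  ∀ x y : X, ∃ s : Set X, IsGeodesicSegment s x y

/-- `s1, s2, s3` are the sides of a geodesic triangle with vertices `a, b, c`. -/
def IsGeodesicTriangle {X : Type*} [MetricSpace X] (a b c : X) (s1 s2 s3 : Set X) : Prop :=
  IsGeodesicSegment s1 a b ∧ IsGeodesicSegment s2 b c ∧ IsGeodesicSegment s3 c a

/-- `X` is `δ`-hyperbolic: every geodesic triangle has a `δ`-center, i.e. a point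
within distance `δ` of each of the three sides. -/
def DeltaHyperbolic (X : Type*) [MetricSpace X] (δ : ℝ) : Prop :=
  ∀ (a b c : X) (s1 s2 s3 : Set X), IsGeodesicTriangle a b c s1 s2 s3 →
    ∃ p : X, Metric.infDist p s1 ≤ δ ∧ Metric.infDist p s2 ≤ δ ∧ Metric.infDist p s3 ≤ δ

/-- `X` is Gromov hyperbolic if it is `δ`-hyperbolic for some `δ ≥ 0`. -/
def GromovHyperbolic (X : Type*) [MetricSpace X] : Prop :=
  ∃ δ : ℝ, 0 ≤ δ ∧ DeltaHyperbolic X δ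

/-- `f` is a `(l, C)`-quasi-isometric embedding. -/
def QIEmbedding {X Y : Type*} [MetricSpace X] [MetricSpace Y]
    (f : X → Y) (l C : ℝ) : Prop :=
  ∀ x x' : X, (1 / l) * dist x x' - C ≤ dist (f x) (f x') ∧
    dist (f x) (f x') ≤ l * dist x x' + C


section Aux

variable {X : Type*} [MetricSpace X]

namespace IsGeodesicSegment

lemma mem_left {s : Set X} {x y : X} (h : IsGeodesicSegment s x y) : x ∈ s := by
  obtain ⟨γ, h0, hT, hs, hiso⟩ := h
  rw [hs]
  exact ⟨0, ⟨le_refl _, dist_nonneg⟩, h0⟩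

lemma mem_right {s : Set X} {x y : X} (h : IsGeodesicSegment s x y) : y ∈ s := by
  obtain ⟨γ, h0, hT, hs, hiso⟩ := h
  rw [hs]
  exact ⟨dist x y, ⟨dist_nonneg, le_refl _⟩, hT⟩

lemma nonempty {s : Set X} {x y : X} (h : IsGeodesicSegment s x y) : s.Nonempty :=
  ⟨x, h.mem_left⟩

lemma isCompact {s : Set X} {x y : X} (h : IsGeodesicSegment s x y) : IsCompact s := by
  obtain ⟨γ, h0, hT, hs, hiso⟩ := h
  rw [hs]
  refine isCompact_Icc.image_of_continuousOn ?_
  refine LipschitzOnWith.continuousOn (K := 1) ?_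
  intro u hu v hv
  rw [edist_dist, hiso u hu v hv]
  simp only [ENNReal.coe_one, one_mul, edist_dist]
  exact ENNReal.ofReal_le_ofReal (le_of_eq (Real.dist_eq u v).symm)

lemma symm {s : Set X} {x y : X} (h : IsGeodesicSegment s x y) : IsGeodesicSegment s y x := by
  obtain ⟨γ, h0, hT, hs, hiso⟩ := h
  set T := dist x y with hTdef
  have hT' : dist y x = T := dist_comm y x
  refine ⟨fun u => γ (T - u), by simp [hT', hT], by simp [hT', h0], ?_, ?_⟩
  · rw [hs, hT']
    have : (fun u => T - u) '' Icc (0:ℝ) T = Icc 0 T := by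
      ext v
      simp only [Set.mem_image, Set.mem_Icc]
      constructor
      · rintro ⟨u, ⟨h1, h2⟩, rfl⟩; constructor <;> linarith
      · rintro ⟨h1, h2⟩; exact ⟨T - v, ⟨by linarith, by linarith⟩, by ring⟩
    conv_lhs => rw [← this]
    rw [← Set.image_comp]
    rfl
  · rw [hT']
    intro a ha b hb
    have ha' : T - a ∈ Icc (0:ℝ) T := ⟨by linarith [ha.2], by linarith [ha.1]⟩
    have hb' : T - b ∈ Icc (0:ℝ) T := ⟨by linarith [hb.2], by linarith [hb.1]⟩
    rw [hiso _ ha' _ hb']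
    rw [abs_sub_comm]
    congr 1
    ring

end IsGeodesicSegment

/-- sub-segments of an isometric parametrization are geodesic segments -/
lemma isGeodesicSegment_sub (γ : ℝ → X) (T a b : ℝ) (ha : 0 ≤ a) (hab : a ≤ b) (hb : b ≤ T)
    (hiso : ∀ u ∈ Icc (0:ℝ) T, ∀ v ∈ Icc (0:ℝ) T, dist (γ u) (γ v) = |u - v|) :
    IsGeodesicSegment (γ '' Icc a b) (γ a) (γ b) := by
  have hd : dist (γ a) (γ b) = b - a := by
    rw [hiso a ⟨ha, hab.trans hb⟩ b ⟨ha.trans hab, hb⟩, abs_of_nonpos (by linarith)]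
    ring
  refine ⟨fun u => γ (a + u), by simp, by rw [hd]; norm_num, ?_, ?_⟩
  · rw [hd]
    ext v
    simp only [Set.mem_image, Set.mem_Icc]
    constructor
    · rintro ⟨u, ⟨h1, h2⟩, rfl⟩; exact ⟨u - a, ⟨by linarith, by linarith⟩, by norm_num⟩
    · rintro ⟨u, ⟨h1, h2⟩, rfl⟩; exact ⟨a + u, ⟨by linarith, by linarith⟩, rfl⟩
  · rw [hd]
    intro u hu v hv
    rw [hiso _ ⟨by linarith [hu.1], by linarith [hu.2]⟩ _ ⟨by linarith [hv.1], by linarith [hv.2]⟩]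
    congr 1; ring

/-- distances from endpoints to a point on a geodesic -/
lemma geodesic_param_dist {x y : X} (γ : ℝ → X) (h0 : γ 0 = x) (hT : γ (dist x y) = y)
    (hiso : ∀ a ∈ Icc (0:ℝ) (dist x y), ∀ b ∈ Icc (0:ℝ) (dist x y), dist (γ a) (γ b) = |a - b|)
    {u : ℝ} (hu : u ∈ Icc (0:ℝ) (dist x y)) :
    dist x (γ u) = u ∧ dist (γ u) y = dist x y - u := by
  constructor
  · rw [← h0, hiso 0 ⟨le_refl _, dist_nonneg⟩ u hu, abs_of_nonpos (by linarith [hu.1])]; ring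
  · have h := hiso u hu _ ⟨dist_nonneg, le_refl _⟩
    rw [hT] at h
    rw [h, abs_of_nonpos (by linarith [hu.2])]
    ring

lemma IsGeodesicSegment.dist_add {s : Set X} {x y q : X} (h : IsGeodesicSegment s x y)
    (hq : q ∈ s) : dist x q + dist q y = dist x y := by
  obtain ⟨γ, h0, hT, hs, hiso⟩ := h
  rw [hs] at hq
  obtain ⟨u, hu, rfl⟩ := hq
  obtain ⟨e1, e2⟩ := geodesic_param_dist γ h0 hT hiso hu
  rw [e1, e2]; ring

end Aux

section Slim

variable {X : Type*} [MetricSpace X]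

lemma IsGeodesicTriangle.cycle {a b c : X} {s1 s2 s3 : Set X}
    (h : IsGeodesicTriangle a b c s1 s2 s3) : IsGeodesicTriangle b c a s2 s3 s1 :=
  ⟨h.2.1, h.2.2, h.1⟩

/-- extraction of near-center points on the three sides -/
lemma DeltaHyperbolic.center_points {δ : ℝ} (hδ : DeltaHyperbolic X δ) {a b c : X}
    {s1 s2 s3 : Set X} (h : IsGeodesicTriangle a b c s1 s2 s3) {ε : ℝ} (hε : 0 < ε) :
    ∃ q1 ∈ s1, ∃ q2 ∈ s2, ∃ q3 ∈ s3, dist q1 q2 ≤ 2*δ + 2*ε ∧ dist q1 q3 ≤ 2*δ + 2*ε ∧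
      dist q2 q3 ≤ 2*δ + 2*ε := by
  obtain ⟨p, h1, h2, h3⟩ := hδ a b c s1 s2 s3 h
  have l1 : Metric.infDist p s1 < δ + ε := by linarith
  have l2 : Metric.infDist p s2 < δ + ε := by linarith
  have l3 : Metric.infDist p s3 < δ + ε := by linarith
  obtain ⟨q1, hq1, hd1⟩ := (Metric.infDist_lt_iff h.1.nonempty).1 l1
  obtain ⟨q2, hq2, hd2⟩ := (Metric.infDist_lt_iff h.2.1.nonempty).1 l2
  obtain ⟨q3, hq3, hd3⟩ := (Metric.infDist_lt_iff h.2.2.nonempty).1 l3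
  refine ⟨q1, hq1, q2, hq2, q3, hq3, ?_, ?_, ?_⟩
  · calc dist q1 q2 ≤ dist q1 p + dist p q2 := dist_triangle _ _ _
    _ ≤ 2*δ + 2*ε := by rw [dist_comm q1 p]; linarith
  · calc dist q1 q3 ≤ dist q1 p + dist p q3 := dist_triangle _ _ _
    _ ≤ 2*δ + 2*ε := by rw [dist_comm q1 p]; linarith
  · calc dist q2 q3 ≤ dist q2 p + dist p q3 := dist_triangle _ _ _
    _ ≤ 2*δ + 2*ε := by rw [dist_comm q2 p]; linarith

/-- key computation: if a triangle over `a x c` has a center and `x` is "between"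
`a` and `c` up to error `E`, then `x` is close to the side from `c` to `a`. -/
lemma lemS {a x c : X} {s1 σ s3 : Set X} (hax : IsGeodesicSegment s1 a x)
    (hxc : IsGeodesicSegment σ x c) {q1 q2 q3 : X}
    (h1 : q1 ∈ s1) (h2 : q2 ∈ σ) (h3 : q3 ∈ s3) {r E : ℝ}
    (h12 : dist q1 q2 ≤ r) (h13 : dist q1 q3 ≤ r)
    (hE : dist x c ≤ dist a c - dist a x + E) :
    Metric.infDist x s3 ≤ E/2 + 2*r := by
  have e1 : dist a q1 + dist q1 x = dist a x := hax.dist_add h1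
  have e2 : dist x q2 + dist q2 c = dist x c := hxc.dist_add h2
  have t1 : dist a x ≤ dist a q2 + dist x q2 := by
    rw [dist_comm x q2]; exact dist_triangle _ _ _
  have t2 : dist a c ≤ dist a q2 + dist q2 c := dist_triangle _ _ _
  have t3 : dist a q2 ≤ dist a q1 + dist q1 q2 := dist_triangle _ _ _
  have hq1x : dist x q1 ≤ E/2 + r := by
    rw [dist_comm x q1]; linarith
  calc Metric.infDist x s3 ≤ dist x q3 := Metric.infDist_le_dist_of_mem h3
    _ ≤ dist x q1 + dist q1 q3 := dist_triangle _ _ _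
    _ ≤ E/2 + 2*r := by linarith

/-- triangles in a `δ`-hyperbolic geodesic space are `6δ`-slim -/
lemma slim_of_deltaHyperbolic (hX : GeodesicSpace X) {δ : ℝ} (hδ : DeltaHyperbolic X δ)
    {a b c : X} {s1 s2 s3 : Set X} (h : IsGeodesicTriangle a b c s1 s2 s3)
    {x : X} (hx : x ∈ s1) :
    min (Metric.infDist x s2) (Metric.infDist x s3) ≤ 6*δ := by
  refine le_of_forall_pos_le_add (fun ε hε => ?_)
  set δ₁ := δ + ε/6 with hδ₁
  have hδ₁pos : 0 < ε/6 := by linarith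
  -- center points of the big triangle
  obtain ⟨p1, hp1, p2, hp2, p3, hp3, h12, h13, h23⟩ := hδ.center_points h hδ₁pos
  -- parametrize side s1
  obtain ⟨γ, h0, hT, hs, hiso⟩ := h.1
  set L := dist a b with hL
  obtain ⟨t, ht, rfl⟩ := by rw [hs] at hx; exact hx
  obtain ⟨s, hsmem, rfl⟩ := by rw [hs] at hp1; exact hp1
  have hdax : dist a (γ t) = t := (geodesic_param_dist γ h0 hT hiso ht).1
  have hdxb : dist (γ t) b = L - t := (geodesic_param_dist γ h0 hT hiso ht).2
  have hdap : dist a (γ s) = s := (geodesic_param_dist γ h0 hT hiso hsmem).1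
  have hdpb : dist (γ s) b = L - s := (geodesic_param_dist γ h0 hT hiso hsmem).2
  have hxp : dist (γ t) (γ s) = |t - s| := hiso t ht s hsmem
  rcases le_total t s with hts | hts
  · -- x between a and p1 : close to s3
    have key : Metric.infDist (γ t) s3 ≤ 6*δ₁ := by
      -- E-estimate
      have e3 : dist c p3 + dist p3 a = dist c a := h.2.2.dist_add hp3
      have e4 : dist a (γ s) ≤ dist a p3 + dist p3 (γ s) := dist_triangle _ _ _
      have hE : dist (γ t) c ≤ dist a c - dist a (γ t) + 4*δ₁ := by
        have f2 : dist (γ t) (γ s) = s - t := by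
          rw [hxp, abs_of_nonpos (by linarith)]; ring
        have f4 : dist p3 c = dist c p3 := dist_comm _ _
        have f5 : s ≤ dist p3 a + dist (γ s) p3 := by
          calc s = dist a (γ s) := hdap.symm
          _ ≤ dist a p3 + dist p3 (γ s) := dist_triangle _ _ _
          _ = dist p3 a + dist (γ s) p3 := by rw [dist_comm a p3, dist_comm p3 (γ s)]
        rw [dist_comm a c, hdax]
        have tri := dist_triangle4 (γ t) (γ s) p3 c
        rw [hδ₁]
        linarith [tri, f2, f4, f5, e3, h13]
      -- sub-triangle (a, x, c)
      have hsub : IsGeodesicSegment (γ '' Icc 0 t) a (γ t) := by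
        have := isGeodesicSegment_sub γ L 0 t (le_refl 0) ht.1 ht.2 hiso
        rwa [h0] at this
      obtain ⟨σ, hσ⟩ := hX (γ t) c
      have htri : IsGeodesicTriangle a (γ t) c (γ '' Icc 0 t) σ s3 := ⟨hsub, hσ, h.2.2⟩
      obtain ⟨q1, hq1, q2, hq2, q3, hq3, g12, g13, g23⟩ := hδ.center_points htri hδ₁pos
      have := lemS hsub hσ hq1 hq2 hq3 g12 g13 hE
      calc Metric.infDist (γ t) s3 ≤ (4*δ₁)/2 + 2*(2*δ + 2*(ε/6)) := this
        _ = 6*δ₁ := by rw [hδ₁]; ring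
    calc min (Metric.infDist (γ t) s2) (Metric.infDist (γ t) s3) ≤ Metric.infDist (γ t) s3 :=
          min_le_right _ _
      _ ≤ 6*δ + ε := by rw [hδ₁] at key; linarith
  · -- x between p1 and b : close to s2
    have key : Metric.infDist (γ t) s2 ≤ 6*δ₁ := by
      have e3 : dist b p2 + dist p2 c = dist b c := h.2.1.dist_add hp2
      have e4 : dist b (γ s) ≤ dist b p2 + dist p2 (γ s) := dist_triangle _ _ _
      have hE : dist (γ t) c ≤ dist b c - dist b (γ t) + 4*δ₁ := by
        have f2 : dist (γ t) (γ s) = t - s := by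
          rw [hxp, abs_of_nonneg (by linarith)]
        have f5 : L - s ≤ dist b p2 + dist (γ s) p2 := by
          calc L - s = dist (γ s) b := hdpb.symm
          _ ≤ dist (γ s) p2 + dist p2 b := dist_triangle _ _ _
          _ = dist b p2 + dist (γ s) p2 := by rw [dist_comm p2 b]; ring
        have e6 : dist b (γ t) = L - t := by rw [dist_comm]; exact hdxb
        rw [e6]
        have tri := dist_triangle4 (γ t) (γ s) p2 c
        rw [hδ₁]
        linarith [tri, f2, f5, e3, h12, e6]
      -- sub-triangle (b, x, c)
      have hsub : IsGeodesicSegment (γ '' Icc t L) b (γ t) := by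
        have := isGeodesicSegment_sub γ L t L ht.1 ht.2 (le_refl _) hiso
        rw [hT] at this
        exact this.symm
      obtain ⟨σ, hσ⟩ := hX (γ t) c
      have htri : IsGeodesicTriangle b (γ t) c (γ '' Icc t L) σ s2 := ⟨hsub, hσ, h.2.1.symm⟩
      obtain ⟨q1, hq1, q2, hq2, q3, hq3, g12, g13, g23⟩ := hδ.center_points htri hδ₁pos
      have := lemS hsub hσ hq1 hq2 hq3 g12 g13 hE
      calc Metric.infDist (γ t) s2 ≤ (4*δ₁)/2 + 2*(2*δ + 2*(ε/6)) := this
        _ = 6*δ₁ := by rw [hδ₁]; ring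
    calc min (Metric.infDist (γ t) s2) (Metric.infDist (γ t) s3) ≤ Metric.infDist (γ t) s2 :=
          min_le_left _ _
      _ ≤ 6*δ + ε := by rw [hδ₁] at key; linarith

end Slim

section Contraction

variable {X : Type*} [MetricSpace X]

lemma contraction {K6 G : ℝ} (hX : GeodesicSpace X) (hK6 : 0 ≤ K6) (hG : 0 ≤ G)
    (hslim : ∀ (a b c : X) (s1 s2 s3 : Set X), IsGeodesicTriangle a b c s1 s2 s3 →
      ∀ x ∈ s1, min (Metric.infDist x s2) (Metric.infDist x s3) ≤ K6) :
    ∀ n : ℕ, ∀ y : ℕ → X, (∀ i, i < n → dist (y i) (y (i+1)) ≤ G) →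
      ∀ s : Set X, IsGeodesicSegment s (y 0) (y n) → ∀ w ∈ s,
        ∃ i ≤ n, dist w (y i) ≤ K6 * (Nat.clog 2 n) + G/2 := by
  intro n
  induction n using Nat.strong_induction_on with
  | _ n IH =>
    intro y hgap s hseg w hw
    match n, IH with
    | 0, _ =>
      refine ⟨0, le_refl _, ?_⟩
      obtain ⟨γ, h0, hT, hs, hiso⟩ := hseg
      rw [hs] at hw
      obtain ⟨u, hu, rfl⟩ := hw
      have : dist (y 0) (y 0) = 0 := dist_self _
      rw [this] at hu
      have hu0 : u = 0 := le_antisymm hu.2 hu.1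
      subst hu0
      rw [h0]
      simp
      positivity
    | 1, _ =>
      obtain ⟨γ, h0, hT, hs, hiso⟩ := hseg
      rw [hs] at hw
      obtain ⟨u, hu, rfl⟩ := hw
      obtain ⟨e1, e2⟩ := geodesic_param_dist γ h0 hT hiso hu
      have hTG : dist (y 0) (y 1) ≤ G := hgap 0 (by norm_num)
      rcases le_total u (dist (y 0) (y 1) / 2) with h | h
      · refine ⟨0, by norm_num, ?_⟩
        rw [dist_comm, e1]
        simp only [Nat.clog_one_right]
        push_cast
        linarith
      · refine ⟨1, le_refl _, ?_⟩
        rw [e2]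
        simp only [Nat.clog_one_right]
        push_cast
        linarith
    | (n+2), IH =>
      set N := n + 2 with hN
      have hN2 : 2 ≤ N := by omega
      set m : ℕ := N / 2 with hm
      have hm1 : 1 ≤ m := by omega
      have hmN : m < N := by omega
      have hm2N : N - m < N := by omega
      -- log bounds
      set c := Nat.clog 2 N with hc
      have hc1 : 1 ≤ c := Nat.clog_pos one_lt_two hN2
      have hNle : N ≤ 2 ^ c := Nat.le_pow_clog one_lt_two N
      have hhalf : N - m ≤ 2 ^ (c - 1) := by
        have h2c : 2 ^ c = 2 * 2 ^ (c - 1) := by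
          rw [← pow_succ']
          congr 1
        omega
      have hclog2 : Nat.clog 2 (N - m) ≤ c - 1 := (Nat.clog_le_iff_le_pow one_lt_two).2 hhalf
      have hclog1 : Nat.clog 2 m ≤ c - 1 :=
        le_trans (Nat.clog_mono_right 2 (by omega : m ≤ N - m)) hclog2
      -- the midpoint triangle
      obtain ⟨s', hs'⟩ := hX (y 0) (y m)
      obtain ⟨s'', hs''⟩ := hX (y m) (y N)
      have htri : IsGeodesicTriangle (y N) (y 0) (y m) s s' s'' := ⟨hseg.symm, hs', hs''⟩
      have hmin := hslim _ _ _ _ _ _ htri w hw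
      have hcast : (K6 : ℝ) * (Nat.clog 2 m) ≤ K6 * (c - 1) ∧
          (K6 : ℝ) * (Nat.clog 2 (N - m)) ≤ K6 * (c - 1) := by
        constructor <;>
        · apply mul_le_mul_of_nonneg_left _ hK6
          rw [show ((c : ℝ) - 1) = ((c - 1 : ℕ) : ℝ) by
            rw [Nat.cast_sub hc1]; norm_num]
          exact_mod_cast (by assumption)
      rcases min_le_iff.1 hmin with hside | hside
      · obtain ⟨w', hw's, hw'd⟩ := hs'.isCompact.exists_infDist_eq_dist hs'.nonempty w
        have hww' : dist w w' ≤ K6 := by rw [← hw'd]; exact hside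
        obtain ⟨i, hi, hdi⟩ := IH m hmN y (fun i hi => hgap i (by omega)) s' hs' w' hw's
        refine ⟨i, by omega, ?_⟩
        calc dist w (y i) ≤ dist w w' + dist w' (y i) := dist_triangle _ _ _
          _ ≤ K6 + (K6 * (c - 1) + G/2) := by linarith [hcast.1]
          _ ≤ K6 * c + G/2 := by ring_nf; linarith
      · obtain ⟨w', hw's, hw'd⟩ := hs''.isCompact.exists_infDist_eq_dist hs''.nonempty w
        have hww' : dist w w' ≤ K6 := by rw [← hw'd]; exact hside
        have hyend : y (m + (N - m)) = y N := by congr 1; omega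
        obtain ⟨i, hi, hdi⟩ := IH (N - m) hm2N (fun k => y (m + k))
          (fun i hi => by
            have := hgap (m + i) (by omega)
            rwa [show m + i + 1 = m + (i+1) by omega] at this)
          s'' (by simpa [hyend] using hs'') w' hw's
        refine ⟨m + i, by omega, ?_⟩
        calc dist w (y (m + i)) ≤ dist w w' + dist w' (y (m + i)) := dist_triangle _ _ _
          _ ≤ K6 + (K6 * (c - 1) + G/2) := by linarith [hcast.2]
          _ ≤ K6 * c + G/2 := by ring_nf; linarith

end Contraction

section Stability

lemma sq_le_two_pow {k : ℕ} (hk : 4 ≤ k) : k * k ≤ 2 ^ k := by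
  induction k, hk using Nat.le_induction with
  | base => norm_num
  | succ k hk IH =>
    have h1 : 2 * k + 1 ≤ k * k := by nlinarith
    have h2 : (k+1) * (k+1) = k * k + (2 * k + 1) := by ring
    rw [h2, pow_succ]
    linarith

variable {X : Type*} [MetricSpace X]

set_option maxHeartbeats 2000000 in
lemma stability {K6 : ℝ} (hX : GeodesicSpace X) (hK6 : 1 ≤ K6)
    (hslim : ∀ (a b c : X) (s1 s2 s3 : Set X), IsGeodesicTriangle a b c s1 s2 s3 →
      ∀ x ∈ s1, min (Metric.infDist x s2) (Metric.infDist x s3) ≤ K6)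
    (l C₂ G : ℝ) (hl : 1 ≤ l) (hC₂ : 0 ≤ C₂) (hG : 0 ≤ G) :
    ∃ M : ℝ, 0 ≤ M ∧ ∀ (n : ℕ) (z : ℕ → X),
      (∀ i, i < n → dist (z i) (z (i+1)) ≤ G) →
      (∀ i, i ≤ n → ∀ j, j ≤ n → |(i:ℝ) - (j:ℝ)| ≤ l * dist (z i) (z j) + C₂) →
      ∀ s : Set X, IsGeodesicSegment s (z 0) (z n) → ∀ w ∈ s,
        ∃ k ≤ n, dist w (z k) ≤ M := by
  set A : ℝ := 2 * (6*l + C₂ + 2) * K6 with hA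
  have hA0 : 0 ≤ A := by positivity
  set k0 : ℕ := max 5 ⌈4*A⌉₊ with hk0
  set M : ℝ := max (2*K6*(k0:ℝ)) (max G 1) with hM
  have hM0 : 0 ≤ M := le_trans (le_trans zero_le_one (le_max_right G 1)) (le_max_right _ _)
  refine ⟨M, hM0, ?_⟩
  clear_value A k0 M
  intro n z hgap hqi s hseg w hw
  set Q : Set X := z '' Set.Iic n with hQ
  have hQfin : Q.Finite := (Set.finite_Iic n).image z
  have hQne : Q.Nonempty := ⟨z 0, 0, Set.mem_Iic.2 (Nat.zero_le n), rfl⟩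
  have hQcomp : IsCompact Q := hQfin.isCompact
  obtain ⟨w0, hw0s, hw0max⟩ := hseg.isCompact.exists_isMaxOn hseg.nonempty
    (Metric.continuous_infDist_pt Q).continuousOn
  set D0 : ℝ := Metric.infDist w0 Q with hD0def
  have hD00 : 0 ≤ D0 := Metric.infDist_nonneg
  -- it suffices to bound D0
  suffices hD0M : D0 ≤ M by
    have hwle : Metric.infDist w Q ≤ D0 := hw0max hw
    obtain ⟨q, hqQ, hqd⟩ := hQcomp.exists_infDist_eq_dist hQne w
    obtain ⟨k, hk, rfl⟩ := hqQ
    exact ⟨k, Set.mem_Iic.1 hk, by rw [← hqd]; linarith⟩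
  by_contra hcon
  push_neg at hcon
  have hcon' : max (2*K6*(k0:ℝ)) (max G 1) < D0 := by rw [← hM]; exact hcon
  have hDG : G < D0 := lt_of_le_of_lt ((le_max_left G 1).trans (le_max_right _ _)) hcon'
  have hD1 : 1 < D0 := lt_of_le_of_lt ((le_max_right G 1).trans (le_max_right _ _)) hcon'
  have hDk0 : 2*K6*(k0:ℝ) < D0 := lt_of_le_of_lt (le_max_left _ _) hcon'
  -- parametrize s
  obtain ⟨γ, h0, hT, hs, hiso⟩ := hseg
  set T : ℝ := dist (z 0) (z n) with hTdef
  obtain ⟨τ, hτ, rfl⟩ := by rw [hs] at hw0s; exact hw0s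
  set α : ℝ := max 0 (τ - 2*D0) with hα
  set β : ℝ := min T (τ + 2*D0) with hβ
  have hα0 : 0 ≤ α := le_max_left _ _
  have hατ : α ≤ τ := max_le hτ.1 (by linarith)
  have hτβ : τ ≤ β := le_min hτ.2 (by linarith)
  have hβT : β ≤ T := min_le_left _ _
  set u : X := γ α with hu
  set v : X := γ β with hv
  have hαmem : α ∈ Set.Icc (0:ℝ) T := ⟨hα0, hατ.trans hτ.2⟩
  have hβmem : β ∈ Set.Icc (0:ℝ) T := ⟨hτ.1.trans hτβ, hβT⟩
  have hus : u ∈ s := by rw [hs]; exact ⟨α, hαmem, rfl⟩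
  have hvs : v ∈ s := by rw [hs]; exact ⟨β, hβmem, rfl⟩
  -- nearest chain points to u and v
  obtain ⟨qu, hquQ, hqud⟩ := hQcomp.exists_infDist_eq_dist hQne u
  obtain ⟨qv, hqvQ, hqvd⟩ := hQcomp.exists_infDist_eq_dist hQne v
  have hqule : dist u qu ≤ D0 := by rw [← hqud]; exact hw0max hus
  have hqvle : dist v qv ≤ D0 := by rw [← hqvd]; exact hw0max hvs
  obtain ⟨i, hi, rfl⟩ := hquQ
  obtain ⟨j, hj, rfl⟩ := hqvQ
  rw [Set.mem_Iic] at hi hj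
  -- the detour chain
  set m0 : ℕ := max i j - min i j with hm0
  set e : ℕ → ℕ := fun k => if i ≤ j then i + k else i - k with he
  set cs : ℕ → X := fun k => if k = 0 then u else if k ≤ m0 + 1 then z (e (k-1)) else v with hcs
  set mt : ℕ := m0 + 2 with hmt
  have hcs0 : cs 0 = u := rfl
  have hcsmt : cs mt = v := by
    simp only [hcs]
    rw [if_neg (by omega), if_neg (by omega)]
  have hcse : ∀ k, 1 ≤ k → k ≤ m0 + 1 → cs k = z (e (k-1)) := by
    intro k h1 h2
    simp only [hcs]
    rw [if_neg (by omega), if_pos h2]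
  have he0 : e 0 = i := by simp [he]
  have hem0 : e m0 = j := by
    simp only [he]
    split <;> omega
  have heQ : ∀ k, k ≤ m0 → z (e k) ∈ Q := by
    intro k hk
    exact ⟨e k, Set.mem_Iic.2 (by simp only [he]; split <;> omega), rfl⟩
  -- gaps of the detour chain
  have hgap' : ∀ k, k < mt → dist (cs k) (cs (k+1)) ≤ D0 := by
    intro k hk
    rcases Nat.eq_zero_or_pos k with rfl | hkpos
    · rw [hcs0, show (0+1) = 1 by rfl, hcse 1 (le_refl _) (by omega), show (1-1 : ℕ) = 0 by rfl,
        he0]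
      exact hqule
    rcases Nat.lt_or_ge k (m0 + 1) with hlt | hge
    · rw [hcse k hkpos (by omega), hcse (k+1) (by omega) (by omega)]
      have harg : k + 1 - 1 = (k-1) + 1 := by omega
      rw [harg]
      have : dist (z (e (k-1))) (z (e (k-1+1))) ≤ G := by
        simp only [he]
        split_ifs with hij
        · have : i + (k-1+1) = (i + (k-1)) + 1 := by omega
          rw [this]
          refine hgap _ (by omega)
        · have hk1 : k - 1 + 1 ≤ m0 := by omega
          have hidx : i - (k-1) = (i - (k-1+1)) + 1 := by omega
          rw [hidx, dist_comm]
          refine hgap _ (by omega)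
      linarith
    · have hkeq : k = m0 + 1 := by omega
      subst hkeq
      rw [hcse (m0+1) (by omega) (le_refl _), show m0+1-1 = m0 by omega, hem0,
        show m0+1+1 = mt by omega, hcsmt, dist_comm]
      exact hqvle
  -- the subsegment from u to v
  have hsub : IsGeodesicSegment (γ '' Set.Icc α β) u v :=
    isGeodesicSegment_sub γ T α β hα0 (hατ.trans hτβ) hβT hiso
  have hw0sub : γ τ ∈ γ '' Set.Icc α β := ⟨τ, ⟨hατ, hτβ⟩, rfl⟩
  -- apply the contraction lemma
  obtain ⟨k, hkmt, hkd⟩ := contraction hX (by linarith : (0:ℝ) ≤ K6) hD00 hslim mt cs hgap'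
    (γ '' Set.Icc α β) (by rw [hcs0, hcsmt]; exact hsub) (γ τ) hw0sub
  -- every chain point is at distance ≥ D0 from w0
  have hlow : D0 ≤ dist (γ τ) (cs k) := by
    rcases Nat.eq_zero_or_pos k with rfl | hkpos
    · rw [hcs0]
      rcases le_or_gt 0 (τ - 2*D0) with hcase | hcase
      · have : α = τ - 2*D0 := max_eq_right hcase
        have hd : dist (γ τ) u = |τ - α| := hiso τ hτ α hαmem
        rw [hd, this, abs_of_nonneg (by linarith)]
        linarith
      · have hα' : α = 0 := max_eq_left (by linarith)
        have : u = z 0 := by rw [hu, hα', h0]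
        rw [this]
        exact Metric.infDist_le_dist_of_mem ⟨0, Set.mem_Iic.2 (Nat.zero_le n), rfl⟩
    rcases Nat.lt_or_ge k (mt) with hlt | hge
    · rcases Nat.lt_or_ge k (m0 + 2) with hlt2 | hge2
      · rw [hcse k hkpos (by omega)]
        exact Metric.infDist_le_dist_of_mem (heQ (k-1) (by omega))
      · omega
    · have : k = mt := le_antisymm hkmt hge
      subst this
      rw [hcsmt]
      rcases le_or_gt (τ + 2*D0) T with hcase | hcase
      · have hβ' : β = τ + 2*D0 := min_eq_right hcase
        have hd : dist (γ τ) v = |τ - β| := hiso τ hτ β hβmem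
        rw [hd, hβ', abs_of_nonpos (by linarith)]
        linarith
      · have hβ' : β = T := min_eq_left (by linarith)
        have : v = z n := by rw [hv, hβ', hT]
        rw [this]
        exact Metric.infDist_le_dist_of_mem ⟨n, Set.mem_Iic.2 (le_refl n), rfl⟩
  -- hence D0/2 ≤ K6 * clog 2 mt
  set cc : ℕ := Nat.clog 2 mt with hcc
  clear_value cc
  have hstep : D0 / 2 ≤ K6 * (cc : ℝ) := by
    have := hlow.trans hkd
    linarith
  have hDcc : D0 ≤ 2 * K6 * (cc : ℝ) := by linarith
  -- bound mt linearly in D0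
  have hdistuv : dist u v ≤ 4 * D0 := by
    have : dist u v = |α - β| := hiso α hαmem β hβmem
    rw [this, abs_of_nonpos (by linarith)]
    have h1 : τ - 2*D0 ≤ α := le_max_right _ _
    have h2 : β ≤ τ + 2*D0 := min_le_right _ _
    linarith
  have hmtbound : (mt : ℝ) ≤ A * cc := by
    have hzij : dist (z i) (z j) ≤ 6 * D0 := by
      have t1 : dist (z i) (z j) ≤ dist (z i) u + dist u v + dist v (z j) :=
        dist_triangle4 _ _ _ _
      rw [dist_comm (z i) u] at t1
      linarith
    have hij := hqi i hi j hj
    have hm0r : (m0 : ℝ) = |(i:ℝ) - (j:ℝ)| := by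
      rcases le_total i j with hc | hc
      · have h1 : m0 = j - i := by omega
        rw [h1, Nat.cast_sub hc, abs_sub_comm, abs_of_nonneg (sub_nonneg.2 (Nat.cast_le.2 hc))]
      · have h1 : m0 = i - j := by omega
        rw [h1, Nat.cast_sub hc, abs_of_nonneg (sub_nonneg.2 (Nat.cast_le.2 hc))]
    have hmt1 : (mt : ℝ) = (m0 : ℝ) + 2 := by rw [hmt]; push_cast; ring
    have hl6 : l * dist (z i) (z j) ≤ l * (6 * D0) :=
      mul_le_mul_of_nonneg_left hzij (by linarith)
    have hstep2 : (mt : ℝ) ≤ (6*l + C₂ + 2) * D0 := by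
      rw [hmt1]
      have : (C₂ + 2) * 1 ≤ (C₂ + 2) * D0 := by
        apply mul_le_mul_of_nonneg_left (le_of_lt hD1) (by linarith)
      nlinarith [hm0r, hij, hl6]
    calc (mt : ℝ) ≤ (6*l + C₂ + 2) * D0 := hstep2
      _ ≤ (6*l + C₂ + 2) * (2 * K6 * cc) := by
          apply mul_le_mul_of_nonneg_left hDcc (by linarith)
      _ = A * cc := by rw [hA]; ring
  -- final contradiction
  have hccmt : cc = Nat.clog 2 mt := hcc
  clear_value mt m0
  have hccpos : (k0:ℝ) < (cc:ℝ) := by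
    have hK60 : (0:ℝ) < 2 * K6 := by linarith
    have h := lt_of_lt_of_le hDk0 hDcc
    exact (mul_lt_mul_iff_right₀ hK60).1 h
  have hk0cc : k0 < cc := by exact_mod_cast hccpos
  obtain ⟨d, hcd⟩ : ∃ d, cc = d + 1 := by
    have h5k0' : 5 ≤ k0 := by rw [hk0]; exact le_max_left _ _
    exact ⟨cc - 1, by omega⟩
  have h5k0 : 5 ≤ k0 := by rw [hk0]; exact le_max_left _ _
  have hd5 : 5 ≤ d := by omega
  have hd4A : 4 * A ≤ (d : ℝ) := by
    have h1 : (⌈4*A⌉₊ : ℕ) ≤ k0 := by rw [hk0]; exact le_max_right _ _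
    have h2 : 4*A ≤ (⌈4*A⌉₊ : ℝ) := Nat.le_ceil _
    have h3 : (⌈4*A⌉₊ : ℝ) ≤ (d : ℝ) := by exact_mod_cast (by omega : ⌈4*A⌉₊ ≤ d)
    linarith
  have hpowlt : (2:ℕ) ^ d < mt := by
    by_contra hle
    push_neg at hle
    have h2 := (Nat.clog_le_iff_le_pow one_lt_two).2 hle
    rw [← hccmt] at h2
    omega
  have hsq : ((d:ℝ) * (d:ℝ)) ≤ (2:ℝ) ^ d := by
    exact_mod_cast sq_le_two_pow (by omega : 4 ≤ d)
  have hAd : A * ((d:ℝ) + 1) ≤ (d:ℝ) * (d:ℝ) := by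
    have hd4 : (4:ℝ) ≤ (d:ℝ) := by exact_mod_cast (by omega : 4 ≤ d)
    nlinarith
  have hreal : (2:ℝ) ^ d < A * ((d:ℝ) + 1) := by
    have h1 : ((2:ℕ)^d : ℝ) < (mt : ℝ) := by exact_mod_cast hpowlt
    have h2 : A * (cc:ℝ) = A * ((d:ℝ)+1) := by rw [hcd]; push_cast; ring
    rw [← h2]
    push_cast at h1 ⊢
    linarith
  linarith

end Stability

section Transfer

lemma abs_min_sub_min (x y L : ℝ) : |min x L - min y L| ≤ |x - y| := by
  have h1 := le_abs_self (x - y)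
  have h2 := neg_abs_le (x - y)
  rcases le_total x L with hx | hx <;> rcases le_total y L with hy | hy
  · rw [min_eq_left hx, min_eq_left hy]
  · rw [min_eq_left hx, min_eq_right hy]
    exact abs_le.2 ⟨by linarith, by linarith⟩
  · rw [min_eq_right hx, min_eq_left hy]
    exact abs_le.2 ⟨by linarith, by linarith⟩
  · rw [min_eq_right hx, min_eq_right hy]
    simp [abs_nonneg]

variable {X Y : Type*} [MetricSpace X] [MetricSpace Y]

lemma chain_exists (f : X → Y) (l C D : ℝ) (hl : 1 ≤ l) (hD : 0 ≤ D)
    (hqi : QIEmbedding f l C) (hdense : ∀ y : Y, ∃ x : X, dist y (f x) ≤ D)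
    {A B : Y} {σ : Set Y} (hσ : IsGeodesicSegment σ A B)
    {A' B' : X} (hA : dist (f A') A ≤ D) (hB : dist (f B') B ≤ D) :
    ∃ (n : ℕ) (z : ℕ → X), z 0 = A' ∧ z n = B' ∧
      (∀ i, i < n → dist (z i) (z (i+1)) ≤ l*(1 + 2*D + C)) ∧
      (∀ i, i ≤ n → ∀ j, j ≤ n → |(i:ℝ) - (j:ℝ)| ≤ l * dist (z i) (z j) + (C + 2*D + 2)) ∧
      (∀ k, k ≤ n → ∃ y ∈ σ, dist (f (z k)) y ≤ D) := by
  obtain ⟨γ, h0, hT, hs, hiso⟩ := hσ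
  set L : ℝ := dist A B with hL
  have hL0 : 0 ≤ L := dist_nonneg
  have hlpos : (0:ℝ) < l := by linarith
  set n : ℕ := ⌈L⌉₊ + 1 with hn
  have hLn : L ≤ n := by
    have := Nat.le_ceil L
    rw [hn]
    push_cast
    linarith
  set t : ℕ → ℝ := fun k => min (k:ℝ) L with ht
  have htmem : ∀ k : ℕ, t k ∈ Set.Icc (0:ℝ) L := fun k =>
    ⟨le_min (Nat.cast_nonneg k) hL0, min_le_right _ _⟩
  set z : ℕ → X := fun k => if k = 0 then A' else if k = n then B'
    else (hdense (γ (t k))).choose with hz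
  have hfz : ∀ k, k ≤ n → dist (f (z k)) (γ (t k)) ≤ D := by
    intro k hk
    rcases Nat.eq_zero_or_pos k with rfl | hkpos
    · have ht0 : t 0 = 0 := by simp [ht, hL0]
      rw [show z 0 = A' from rfl, ht0, h0]
      exact hA
    rcases eq_or_ne k n with hkn | hkn
    · have htn : t k = L := by rw [hkn]; simp only [ht]; exact min_eq_right hLn
      have hzkB : z k = B' := by
        rw [hkn]
        have hn0 : n ≠ 0 := by omega
        simp [hz, hn0]
      rw [hzkB, htn, hT]
      exact hB
    · have hzk : z k = (hdense (γ (t k))).choose := by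
        simp only [hz]
        rw [if_neg (by omega), if_neg hkn]
      rw [hzk, dist_comm]
      exact (hdense (γ (t k))).choose_spec
  have hz0 : z 0 = A' := rfl
  have hzn : z n = B' := by
    have hn0 : n ≠ 0 := by omega
    simp [hz, hn0]
  have htk_ge : ∀ k : ℕ, k ≤ n → (k:ℝ) - 2 ≤ t k := by
    intro k hk
    rcases le_total (k:ℝ) L with h | h
    · rw [ht]; simp only [min_eq_left h]; linarith
    · have h1 : (k:ℝ) ≤ n := Nat.cast_le.2 hk
      have h2 : (n:ℝ) = ⌈L⌉₊ + 1 := by rw [hn]; push_cast; ring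
      have h3 : (⌈L⌉₊:ℝ) ≤ L + 1 := by
        have := Nat.ceil_lt_add_one hL0
        linarith
      rw [ht]; simp only [min_eq_right h]; linarith
  have htk_le : ∀ k : ℕ, t k ≤ k := fun k => min_le_left _ _
  have hdistt : ∀ i j : ℕ, dist (γ (t i)) (γ (t j)) ≤ |(i:ℝ) - (j:ℝ)| := by
    intro i j
    rw [hiso _ (htmem i) _ (htmem j)]
    exact abs_min_sub_min _ _ _
  refine ⟨n, z, hz0, hzn, ?_, ?_, ?_⟩
  · -- gaps
    intro i hi
    have h1 : dist (f (z i)) (f (z (i+1))) ≤ 1 + 2*D := by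
      have htt : dist (γ (t i)) (γ (t (i+1))) ≤ 1 := by
        refine (hdistt i (i+1)).trans ?_
        rw [show ((i:ℝ) - (i+1:ℕ)) = -1 by push_cast; ring]
        norm_num
      have ha := hfz i (by omega)
      have hb := hfz (i+1) (by omega)
      calc dist (f (z i)) (f (z (i+1))) ≤
          dist (f (z i)) (γ (t i)) + dist (γ (t i)) (γ (t (i+1))) + dist (γ (t (i+1))) (f (z (i+1))) :=
            dist_triangle4 _ _ _ _
        _ ≤ D + 1 + D := by
            rw [dist_comm (γ (t (i+1)))]
            linarith
        _ = 1 + 2*D := by ring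
    have h2 := (hqi (z i) (z (i+1))).1
    have h3 : (1/l) * dist (z i) (z (i+1)) ≤ 1 + 2*D + C := by linarith
    have h4 : dist (z i) (z (i+1)) = l * ((1/l) * dist (z i) (z (i+1))) := by
      field_simp
    rw [h4]
    exact mul_le_mul_of_nonneg_left h3 (by linarith)
  · -- quasi-geodesic index bound
    have key : ∀ i, i ≤ n → ∀ j, j ≤ n → i ≤ j →
        (j:ℝ) - (i:ℝ) ≤ l * dist (z i) (z j) + (C + 2*D + 2) := by
      intro i hi j hj hij
      have ha := hfz i hi
      have hb := hfz j hj
      have hq := (hqi (z i) (z j)).2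
      have htri : dist (γ (t i)) (γ (t j)) ≤ D + (l * dist (z i) (z j) + C) + D := by
        calc dist (γ (t i)) (γ (t j)) ≤
            dist (γ (t i)) (f (z i)) + dist (f (z i)) (f (z j)) + dist (f (z j)) (γ (t j)) :=
              dist_triangle4 _ _ _ _
          _ ≤ D + (l * dist (z i) (z j) + C) + D := by
              rw [dist_comm (γ (t i))]
              linarith
      have habs : t j - t i ≤ dist (γ (t i)) (γ (t j)) := by
        rw [hiso _ (htmem i) _ (htmem j), abs_sub_comm]
        exact le_abs_self _
      have h5 := htk_ge j hj
      have h6 := htk_le i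
      linarith
    intro i hi j hj
    rcases le_total i j with hij | hij
    · rw [abs_of_nonpos (by simp only [sub_nonpos]; exact_mod_cast hij)]
      have := key i hi j hj hij
      linarith
    · rw [abs_of_nonneg (by simp only [sub_nonneg]; exact_mod_cast hij)]
      have := key j hj i hi hij
      rw [dist_comm]
      linarith
  · intro k hk
    exact ⟨γ (t k), by rw [hs]; exact ⟨t k, htmem k, rfl⟩, hfz k hk⟩

end Transfer

section Main

variable {X Y : Type*} [MetricSpace X] [MetricSpace Y]

lemma transfer (hX : GeodesicSpace X) (f : X → Y) (l C D : ℝ)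
    (hl : 1 ≤ l) (hC : 0 ≤ C) (hD : 0 ≤ D) (hqi : QIEmbedding f l C)
    (hdense : ∀ y : Y, ∃ x : X, dist y (f x) ≤ D) :
    GromovHyperbolic X → GromovHyperbolic Y := by
  rintro ⟨δ, hδ0, hδ⟩
  have hslim : ∀ (a b c : X) (s1 s2 s3 : Set X), IsGeodesicTriangle a b c s1 s2 s3 →
      ∀ x ∈ s1, min (Metric.infDist x s2) (Metric.infDist x s3) ≤ 6*δ + 1 := by
    intro a b c s1 s2 s3 htri x hx
    have := slim_of_deltaHyperbolic hX hδ htri hx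
    linarith
  obtain ⟨M, hM0, hstab⟩ := stability hX (by linarith : (1:ℝ) ≤ 6*δ + 1) hslim
    l (C + 2*D + 2) (l*(1 + 2*D + C)) hl (by linarith) (by positivity)
  refine ⟨l*(δ + M) + C + D, by positivity, ?_⟩
  intro a b c σ1 σ2 σ3 htri
  obtain ⟨a', ha'⟩ := hdense a
  obtain ⟨b', hb'⟩ := hdense b
  obtain ⟨c', hc'⟩ := hdense c
  rw [dist_comm] at ha' hb' hc'
  obtain ⟨g1, hg1⟩ := hX a' b'
  obtain ⟨g2, hg2⟩ := hX b' c'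
  obtain ⟨g3, hg3⟩ := hX c' a'
  obtain ⟨p, hp1, hp2, hp3⟩ := hδ a' b' c' g1 g2 g3 ⟨hg1, hg2, hg3⟩
  have main : ∀ (A B : Y) (σ : Set Y) (A' B' : X) (g : Set X),
      IsGeodesicSegment σ A B → dist (f A') A ≤ D → dist (f B') B ≤ D →
      IsGeodesicSegment g A' B' → Metric.infDist p g ≤ δ →
      Metric.infDist (f p) σ ≤ l*(δ + M) + C + D := by
    intro A B σ A' B' g hσ hA hB hg hpg
    obtain ⟨n, zc, hz0, hzn, hgap, hqidx, hnear⟩ :=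
      chain_exists f l C D hl hD hqi hdense hσ hA hB
    obtain ⟨w, hwg, hwd⟩ := hg.isCompact.exists_infDist_eq_dist hg.nonempty p
    have hpw : dist p w ≤ δ := by rw [← hwd]; exact hpg
    have hgz : IsGeodesicSegment g (zc 0) (zc n) := by rw [hz0, hzn]; exact hg
    obtain ⟨k, hk, hwk⟩ := hstab n zc hgap hqidx g hgz w hwg
    obtain ⟨y, hyσ, hy⟩ := hnear k hk
    have hpz : dist p (zc k) ≤ δ + M := by
      calc dist p (zc k) ≤ dist p w + dist w (zc k) := dist_triangle _ _ _
        _ ≤ δ + M := by linarith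
    have hfpz : dist (f p) (f (zc k)) ≤ l * (δ + M) + C := by
      have := (hqi p (zc k)).2
      have h2 : l * dist p (zc k) ≤ l * (δ + M) :=
        mul_le_mul_of_nonneg_left hpz (by linarith)
      linarith
    calc Metric.infDist (f p) σ ≤ dist (f p) y := Metric.infDist_le_dist_of_mem hyσ
      _ ≤ dist (f p) (f (zc k)) + dist (f (zc k)) y := dist_triangle _ _ _
      _ ≤ l*(δ + M) + C + D := by linarith
  exact ⟨f p, main a b σ1 a' b' g1 htri.1 ha' hb' hg1 hp1,
    main b c σ2 b' c' g2 htri.2.1 hb' hc' hg2 hp2,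
    main c a σ3 c' a' g3 htri.2.2 hc' ha' hg3 hp3⟩

end Main

/-- If `f : X → Y` is a quasi-isometry between geodesic metric spaces,
then `X` is Gromov hyperbolic if and only if `Y` is Gromov hyperbolic. -/
theorem quasiIsometry_preserves_hyperbolicity
    {X Y : Type*} [MetricSpace X] [MetricSpace Y]
    (hX : GeodesicSpace X) (hY : GeodesicSpace Y)
    (f : X → Y) (l C D : ℝ) (hl : 1 ≤ l) (hC : 0 ≤ C) (hD : 0 ≤ D)
    (hqi : QIEmbedding f l C)
    (hdense : ∀ y : Y, ∃ x : X, dist y (f x) ≤ D) :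
    GromovHyperbolic X ↔ GromovHyperbolic Y := by
  constructor
  · exact transfer hX f l C D hl hC hD hqi hdense
  · -- construct a quasi-inverse g : Y → X
    set g : Y → X := fun y => (hdense y).choose with hg
    have hgspec : ∀ y : Y, dist y (f (g y)) ≤ D := fun y => (hdense y).choose_spec
    have hlpos : (0:ℝ) < l := by linarith
    have hqig : QIEmbedding g l (l*(C + 2*D)) := by
      intro y y'
      have h1 := (hqi (g y) (g y')).1
      have h2 := (hqi (g y) (g y')).2
      have h3 : dist (f (g y)) (f (g y')) ≤ dist y y' + 2*D := by
        have t1 : dist (f (g y)) (f (g y')) ≤ dist (f (g y)) y + dist y y' + dist y' (f (g y')) :=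
          dist_triangle4 _ _ _ _
        have t2 := hgspec y
        have t3 := hgspec y'
        rw [dist_comm (f (g y)) y] at t1
        linarith
      have h4 : dist y y' ≤ dist (f (g y)) (f (g y')) + 2*D := by
        have t1 : dist y y' ≤ dist y (f (g y)) + dist (f (g y)) (f (g y')) + dist (f (g y')) y' :=
          dist_triangle4 _ _ _ _
        have t2 := hgspec y
        have t3 := hgspec y'
        rw [dist_comm (f (g y')) y'] at t1
        linarith
      constructor
      · -- lower bound
        have h5 : dist y y' ≤ l * dist (g y) (g y') + C + 2*D := by linarith
        have key : (1/l) * dist y y' ≤ (1/l) * (l * dist (g y) (g y') + C + 2*D) :=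
          mul_le_mul_of_nonneg_left h5 (by positivity)
        have expand : (1/l) * (l * dist (g y) (g y') + C + 2*D) =
            dist (g y) (g y') + (C + 2*D)/l := by
          field_simp
          ring
        have h6 : (1/l) * dist y y' ≤ dist (g y) (g y') + (C + 2*D)/l := by
          rw [← expand]; exact key
        have h7 : (C + 2*D)/l ≤ l*(C + 2*D) := by
          rw [div_le_iff₀ hlpos]
          have hC2D : (0:ℝ) ≤ C + 2*D := by linarith
          have hll : (1:ℝ) ≤ l * l := by nlinarith
          nlinarith [mul_le_mul_of_nonneg_left hll hC2D]
        linarith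
      · -- upper bound
        have h5 : (1/l) * dist (g y) (g y') - C ≤ dist y y' + 2*D := by linarith
        have h6 : dist (g y) (g y') = l * ((1/l) * dist (g y) (g y')) := by field_simp
        rw [h6]
        have h7 : (1/l) * dist (g y) (g y') ≤ dist y y' + 2*D + C := by linarith
        calc l * ((1/l) * dist (g y) (g y')) ≤ l * (dist y y' + 2*D + C) :=
              mul_le_mul_of_nonneg_left h7 (by linarith)
          _ ≤ l * dist y y' + l*(C + 2*D) := by nlinarith [dist_nonneg (x := y) (y := y')]
    have hdenseg : ∀ x : X, ∃ y : Y, dist x (g y) ≤ l*(D + C) := by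
      intro x
      refine ⟨f x, ?_⟩
      have h1 := hgspec (f x)
      have h2 := (hqi x (g (f x))).1
      have h3 : (1/l) * dist x (g (f x)) ≤ D + C := by linarith
      have h4 : dist x (g (f x)) = l * ((1/l) * dist x (g (f x))) := by field_simp
      rw [h4]
      exact mul_le_mul_of_nonneg_left h3 (by linarith)
    exact transfer hY g l (l*(C + 2*D)) (l*(D + C)) hl (by positivity) (by positivity)
      hqig hdenseg
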